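/- Let |q| < 1, |ρ| < 1, and let n ≥ 0 be an integer. Then for all real x, y: q^{n(n-1)/2} ρ^n (1-q)^n Q_{n,n}(x,y|ρ,q) = Σ_{k=0}^{n} (-1)^k q^{(n-k)(n-k-1)/2} [n choose k]_q · (∏_{j=0}^{k-1} ω(x√(1-q)/2, y√(1-q)/2 | ρ q^j)) / (ρ²;q)_{2k}, where an empty product ∏_{j=0}^{-1} is interpreted as 1. -/

import Mathlib

open Finset MeasureTheory

noncomputable section

/-- [n]_q = 1 + q + ... + q^{n-1} -/
def qNat (q : ℝ) (n : ℕ) : ℝ := ∑ j ∈ Finset.range n, q ^ j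

/-- [n]_q! -/
def qFact (q : ℝ) : ℕ → ℝ
  | 0 => 1
  | n + 1 => qFact q n * qNat q (n + 1)

/-- q-binomial coefficient -/
def qBinom (q : ℝ) (n k : ℕ) : ℝ :=
  if k ≤ n then qFact q n / (qFact q (n - k) * qFact q k) else 0

/-- q-Pochhammer symbol (a;q)_n -/
def qPoch (a q : ℝ) (n : ℕ) : ℝ := ∏ j ∈ Finset.range n, (1 - a * q ^ j)

/-- q-Pochhammer symbol (a;q)_∞ -/
def qPochInf (a q : ℝ) : ℝ := ∏' j : ℕ, (1 - a * q ^ j)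

/-- continuous q-Hermite polynomials H_n(x|q) -/
def qHermite (q : ℝ) : ℕ → ℝ → ℝ
  | 0, _ => 1
  | 1, x => x
  | n + 2, x => x * qHermite q (n + 1) x - qNat q (n + 1) * qHermite q n x

/-- big q-Hermite polynomials H_n(x|a,q) -/
def bigqHermite (q a : ℝ) : ℕ → ℝ → ℝ
  | 0, _ => 1
  | 1, x => x - a
  | n + 2, x => (x - a * q ^ (n + 1)) * bigqHermite q a (n + 1) x -
      qNat q (n + 1) * bigqHermite q a n x

/-- rescaled Al-Salam--Chihara polynomials P_n(x|y,ρ,q) -/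
def ascP (q y ρ : ℝ) : ℕ → ℝ → ℝ
  | 0, _ => 1
  | 1, x => x - ρ * y
  | n + 2, x => (x - ρ * y * q ^ (n + 1)) * ascP q y ρ (n + 1) x -
      qNat q (n + 1) * (1 - ρ ^ 2 * q ^ n) * ascP q y ρ n x

/-- generating function φ_H(x|t,q) of the q-Hermite polynomials -/
def phiH (q t x : ℝ) : ℝ := ∑' n : ℕ, t ^ n / qFact q n * qHermite q n x

/-- γ_{i,j}(x,y|ρ,q) -/
def gammaPM (q ρ : ℝ) (i j : ℕ) (x y : ℝ) : ℝ :=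
  ∑' n : ℕ, ρ ^ n / qFact q n * qHermite q (n + i) x * qHermite q (n + j) y

/-- the polynomials Q_{i,j}(x,y|ρ,q) -/
def Qpoly (q ρ : ℝ) (i j : ℕ) (x y : ℝ) : ℝ :=
  ∑ s ∈ Finset.range (j + 1),
    (-1 : ℝ) ^ s * q ^ (s * (s - 1) / 2) * qBinom q j s * ρ ^ s * qHermite q (j - s) y *
      ascP q y ρ (i + s) x / qPoch (ρ ^ 2) q (i + s)

/-- the interval S(q) = [-2/√(1-q), 2/√(1-q)] -/
def Sq (q : ℝ) : Set ℝ := Set.Icc (-(2 / Real.sqrt (1 - q))) (2 / Real.sqrt (1 - q))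

/-- ω(x,y|ρ) -/
def omegaPM (x y ρ : ℝ) : ℝ :=
  (1 - ρ ^ 2) ^ 2 - 4 * ρ * (1 + ρ ^ 2) * x * y + 4 * ρ ^ 2 * (x ^ 2 + y ^ 2)

/-- l(x|a) -/
def lPM (x a : ℝ) : ℝ := (1 + a) ^ 2 - 4 * a * x ^ 2

/-- the q-Normal density f_N(x|q) -/
def fN (q x : ℝ) : ℝ :=
  Real.sqrt ((1 - q) * (4 - (1 - q) * x ^ 2)) * qPochInf q q / (2 * Real.pi) *
    ∏' j : ℕ, lPM (x * Real.sqrt (1 - q) / 2) (q ^ (j + 1))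

/-- the (q,ρ)-Conditional Normal density f_CN(x|y,ρ,q) -/
def fCN (q ρ x y : ℝ) : ℝ :=
  fN q x * qPochInf (ρ ^ 2) q /
    ∏' j : ℕ, omegaPM (x * Real.sqrt (1 - q) / 2) (y * Real.sqrt (1 - q) / 2) (ρ * q ^ j)

/-- the (ρ,q)-bivariate Normal density f_{2D}(x,y|ρ,q) -/
def f2D (q ρ x y : ℝ) : ℝ := fCN q ρ x y * fN q y

section Basic
variable (q : ℝ)

lemma qNat_zero : qNat q 0 = 0 := by simp [qNat]
lemma qNat_succ (n : ℕ) : qNat q (n+1) = qNat q n + q ^ n := Finset.sum_range_succ _ n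
lemma qNat_one : qNat q 1 = 1 := by simp [qNat]
lemma qNat_add (a b : ℕ) : qNat q (a+b) = qNat q a + q ^ a * qNat q b := by
  unfold qNat
  rw [Finset.sum_range_add, Finset.mul_sum]
  congr 1
  exact Finset.sum_congr rfl fun i _ => (pow_add q a i)

lemma qFact_succ (n : ℕ) : qFact q (n+1) = qFact q n * qNat q (n+1) := rfl

variable {q} (hq : |q| < 1)
include hq

lemma qNat_pos {n : ℕ} (hn : 1 ≤ n) : 0 < qNat q n := by
  have h1 : (1-q) * qNat q n = 1 - q ^ n := by
    induction n with
    | zero => simp [qNat_zero]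
    | succ m ih =>
      rcases Nat.eq_zero_or_pos m with hm | hm
      · subst hm; simp [qNat_one]
      · rw [qNat_succ, mul_add, ih hm]; ring
  have hq1 : q < 1 := (abs_lt.mp hq).2
  have hqn : q ^ n < 1 := by
    calc q ^ n ≤ |q ^ n| := le_abs_self _
    _ = |q| ^ n := by rw [abs_pow]
    _ ≤ |q| ^ 1 := pow_le_pow_of_le_one (abs_nonneg q) hq.le hn
    _ < 1 := by simpa using hq
  have h2 : 0 < (1-q) * qNat q n := by rw [h1]; linarith
  rcases mul_pos_iff.mp h2 with ⟨_, h⟩ | ⟨h, _⟩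
  · exact h
  · linarith

lemma qFact_pos (n : ℕ) : 0 < qFact q n := by
  induction n with
  | zero => norm_num [qFact]
  | succ m ih => rw [qFact_succ]; exact mul_pos ih (qNat_pos hq m.succ_pos)

end Basic
section Binom
variable {q : ℝ} (hq : |q| < 1)
include hq

lemma qFact_ne (n : ℕ) : qFact q n ≠ 0 := (qFact_pos hq n).ne'
lemma qNat_ne {n : ℕ} (hn : 1 ≤ n) : qNat q n ≠ 0 := (qNat_pos hq hn).ne'

lemma qBinom_self (n : ℕ) : qBinom q n n = 1 := by
  rw [qBinom, if_pos le_rfl, Nat.sub_self, show qFact q 0 = 1 from rfl]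
  field_simp [qFact_ne hq]

omit hq in
lemma qBinom_gt {n k : ℕ} (h : n < k) : qBinom q n k = 0 := by
  rw [qBinom, if_neg (by omega)]

lemma qBinom_absorb (j s : ℕ) :
    qBinom q (j+1) s * qNat q (j+1-s) = qNat q (j+1) * qBinom q j s := by
  rcases le_or_gt s j with hs | hs
  · obtain ⟨m, rfl⟩ := Nat.exists_eq_add_of_le hs
    rw [qBinom, if_pos (by omega), qBinom, if_pos (by omega),
      show s + m + 1 - s = m + 1 from by omega, show s + m - s = m from by omega,
      show qFact q (s+m+1) = qFact q (s+m) * qNat q (s+m+1) from rfl,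
      show qFact q (m+1) = qFact q m * qNat q (m+1) from rfl,
      show qNat q (s+m+1) = qNat q (m+1) + q^(m+1) * qNat q s from by
        rw [← qNat_add]; congr 1 <;> omega]
    have h1 := qFact_ne hq (s+m)
    have h2 := qFact_ne hq m
    have h3 := qFact_ne hq s
    have h4 : qNat q (m+1) ≠ 0 := qNat_ne hq (by omega)
    field_simp
  · rcases eq_or_lt_of_le (by omega : j+1 ≤ s) with hs2 | hs2
    · rw [← hs2, show j+1-(j+1) = 0 from by omega, qNat_zero, mul_zero,
        qBinom_gt (by omega), mul_zero]
    · rw [qBinom_gt (by omega), qBinom_gt (by omega), zero_mul, mul_zero]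

lemma qBinom_pascal1 (j s : ℕ) :
    qBinom q (j+2) (s+1) = qBinom q (j+1) (s+1) + q^(j+1-s) * qBinom q (j+1) s := by
  rcases le_or_gt s j with hs | hs
  · obtain ⟨m, rfl⟩ := Nat.exists_eq_add_of_le hs
    rw [qBinom, if_pos (by omega), qBinom, if_pos (by omega), qBinom, if_pos (by omega),
      show s + m + 2 - (s+1) = m + 1 from by omega,
      show s + m + 1 - (s+1) = m from by omega,
      show s + m + 1 - s = m + 1 from by omega,
      show qFact q (s+m+2) = qFact q (s+m+1) * qNat q (s+m+2) from rfl,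
      show qFact q (m+1) = qFact q m * qNat q (m+1) from rfl,
      show qFact q (s+1) = qFact q s * qNat q (s+1) from rfl,
      show qNat q (s+m+2) = qNat q (m+1) + q^(m+1) * qNat q (s+1) from by
        rw [← qNat_add]; congr 1 <;> omega]
    have h1 := qFact_ne hq (s+m+1)
    have h2 := qFact_ne hq m
    have h3 := qFact_ne hq s
    have h4 : qNat q (m+1) ≠ 0 := qNat_ne hq (by omega)
    have h5 : qNat q (s+1) ≠ 0 := qNat_ne hq (by omega)
    field_simp
  · rcases eq_or_lt_of_le (by omega : j+1 ≤ s) with hs2 | hs2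
    · rw [← hs2, show j+1+1 = j+2 from rfl, qBinom_self hq, qBinom_self hq,
        qBinom_gt (by omega), show j+1-(j+1) = 0 from by omega]
      norm_num
    · rw [qBinom_gt (by omega), qBinom_gt (by omega), qBinom_gt (by omega)]
      ring

lemma qBinom_pascal2 (n k : ℕ) :
    qBinom q (n+1) (k+1) = q^(k+1) * qBinom q n (k+1) + qBinom q n k := by
  rcases le_or_gt (k+1) n with hs | hs
  · obtain ⟨m, rfl⟩ := Nat.exists_eq_add_of_le hs
    rw [qBinom, if_pos (by omega), qBinom, if_pos (by omega), qBinom, if_pos (by omega),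
      show k + 1 + m + 1 - (k+1) = m + 1 from by omega,
      show k + 1 + m - (k+1) = m from by omega,
      show k + 1 + m - k = m + 1 from by omega,
      show qFact q (k+1+m+1) = qFact q (k+1+m) * qNat q (k+1+m+1) from rfl,
      show qFact q (m+1) = qFact q m * qNat q (m+1) from rfl,
      show qFact q (k+1) = qFact q k * qNat q (k+1) from rfl,
      show qNat q (k+1+m+1) = qNat q (k+1) + q^(k+1) * qNat q (m+1) from by
        rw [← qNat_add]; congr 1 <;> omega]
    have h1 := qFact_ne hq (k+1+m)
    have h2 := qFact_ne hq m
    have h3 := qFact_ne hq k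
    have h4 : qNat q (m+1) ≠ 0 := qNat_ne hq (by omega)
    have h5 : qNat q (k+1) ≠ 0 := qNat_ne hq (by omega)
    field_simp
    ring
  · rcases eq_or_lt_of_le (by omega : n ≤ k) with hs2 | hs2
    · rw [hs2, qBinom_gt (show k < k+1 by omega), qBinom_self hq, qBinom_self hq]
      ring
    · rw [qBinom_gt (by omega), qBinom_gt (by omega), qBinom_gt (by omega)]
      ring

end Binom
section Poch

lemma qPoch_succ_bot (a q : ℝ) (n : ℕ) :
    qPoch a q (n+1) = (1-a) * qPoch (a*q) q n := by
  unfold qPoch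
  rw [Finset.prod_range_succ']
  simp only [pow_zero, mul_one]
  rw [mul_comm]
  congr 1
  exact Finset.prod_congr rfl fun j _ => by ring_nf

lemma qPoch_split (ρ q : ℝ) (m : ℕ) :
    qPoch (ρ^2) q (m+2) = (1-ρ^2) * (1-ρ^2*q) * qPoch ((ρ*q)^2) q m := by
  rw [qPoch_succ_bot, qPoch_succ_bot, show ρ^2*q*q = (ρ*q)^2 from by ring]
  ring

lemma qPoch_top_two (a q : ℝ) (n : ℕ) :
    qPoch a q (n+2) = qPoch a q n * ((1-a*q^n) * (1-a*q^(n+1))) := by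
  unfold qPoch
  rw [Finset.prod_range_succ, Finset.prod_range_succ]
  ring

lemma one_sub_sq_mul_pow_pos {q ρ : ℝ} (hq : |q| < 1) (hρ : |ρ| < 1) (j : ℕ) :
    0 < 1 - ρ^2 * q^j := by
  have a : |ρ|^2 < 1 := by nlinarith [abs_nonneg ρ]
  have b : |q|^j ≤ 1 := pow_le_one₀ (abs_nonneg q) hq.le
  have h1 : |ρ^2 * q^j| < 1 := by
    rw [abs_mul, abs_pow, abs_pow]
    calc |ρ|^2 * |q|^j ≤ |ρ|^2 * 1 := by
          apply mul_le_mul_of_nonneg_left b (by positivity)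
      _ < 1 := by linarith
  linarith [(abs_lt.mp h1).2, neg_abs_le (ρ^2*q^j), le_abs_self (ρ^2*q^j)]

lemma qPoch_pos {q ρ : ℝ} (hq : |q| < 1) (hρ : |ρ| < 1) (n : ℕ) :
    0 < qPoch (ρ^2) q n := by
  unfold qPoch
  exact Finset.prod_pos fun j _ => one_sub_sq_mul_pow_pos hq hρ j

end Poch
section Rec

lemma qHermite_two (q y : ℝ) (m : ℕ) :
    qHermite q (m+2) y = y * qHermite q (m+1) y - qNat q (m+1) * qHermite q m y := rfl

lemma ascP_two (q y ρ x : ℝ) (n : ℕ) :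
    ascP q y ρ (n+2) x = (x - ρ*y*q^(n+1)) * ascP q y ρ (n+1) x
      - qNat q (n+1)*(1-ρ^2*q^n)*ascP q y ρ n x := rfl

lemma tri (s : ℕ) : (s+1)*s/2 = s*(s-1)/2 + s := by
  have h1 := Nat.choose_two_right (s+1)
  have h2 := Nat.choose_two_right s
  have h3 : (s+1).choose 2 = s.choose 1 + s.choose 2 := Nat.choose_succ_succ s 1
  have h4 := Nat.choose_one_right s
  simp only [Nat.add_sub_cancel] at h1
  omega

lemma hermite_split (q y : ℝ) (j : ℕ) {s : ℕ} (hs : s ≤ j+1) :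
    qHermite q (j+2-s) y = y * qHermite q (j+1-s) y - qNat q (j+1-s) * qHermite q (j-s) y := by
  rcases le_or_gt s j with h | h
  · rw [show j+2-s = (j-s)+2 from by omega, show j+1-s = (j-s)+1 from by omega, qHermite_two]
  · have hs1 : s = j+1 := by omega
    subst hs1
    rw [show j+2-(j+1) = 1 from by omega, show j+1-(j+1) = 0 from by omega,
      show j-(j+1) = 0 from by omega]
    show qHermite q 1 y = y * qHermite q 0 y - qNat q 0 * qHermite q 0 y
    simp [qHermite, qNat_zero]

variable {q : ℝ} (hq : |q| < 1)
include hq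

lemma qBinom_zero (n : ℕ) : qBinom q n 0 = 1 := by
  rw [qBinom, if_pos (Nat.zero_le n), Nat.sub_zero, show qFact q 0 = 1 from rfl]
  field_simp [qFact_ne hq]

lemma qpoly_rec (ρ x y : ℝ) (i j : ℕ) :
    Qpoly q ρ i (j+2) x y = y * Qpoly q ρ i (j+1) x y - qNat q (j+1) * Qpoly q ρ i j x y
      - ρ * q^(j+1) * Qpoly q ρ (i+1) (j+1) x y := by
  unfold Qpoly
  calc (∑ s ∈ Finset.range (j+2+1),
        (-1:ℝ)^s * q^(s*(s-1)/2) * qBinom q (j+2) s * ρ^s * qHermite q (j+2-s) y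
          * ascP q y ρ (i+s) x / qPoch (ρ^2) q (i+s))
      = (∑ s ∈ Finset.range (j+2),
          (-1:ℝ)^(s+1) * q^((s+1)*(s+1-1)/2) * qBinom q (j+2) (s+1) * ρ^(s+1)
            * qHermite q (j+2-(s+1)) y * ascP q y ρ (i+(s+1)) x / qPoch (ρ^2) q (i+(s+1)))
        + (-1:ℝ)^0 * q^(0*(0-1)/2) * qBinom q (j+2) 0 * ρ^0 * qHermite q (j+2-0) y
            * ascP q y ρ (i+0) x / qPoch (ρ^2) q (i+0) :=
        Finset.sum_range_succ' _ (j+2)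
    _ = (∑ s ∈ Finset.range (j+2),
          (((-1:ℝ)^(s+1) * q^((s+1)*(s+1-1)/2) * qBinom q (j+1) (s+1) * ρ^(s+1)
            * qHermite q (j+2-(s+1)) y * ascP q y ρ (i+(s+1)) x / qPoch (ρ^2) q (i+(s+1)))
          + (-(ρ * q^(j+1) * ((-1:ℝ)^s * q^(s*(s-1)/2) * qBinom q (j+1) s * ρ^s
              * qHermite q (j+1-s) y * ascP q y ρ (i+1+s) x / qPoch (ρ^2) q (i+1+s))))))
        + (-1:ℝ)^0 * q^(0*(0-1)/2) * qBinom q (j+1) 0 * ρ^0 * qHermite q (j+2-0) y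
            * ascP q y ρ (i+0) x / qPoch (ρ^2) q (i+0) := by
        congr 1
        · apply Finset.sum_congr rfl
          intro s hs
          have hsle : s ≤ j+1 := by simpa using Nat.lt_succ_iff.mp (Finset.mem_range.mp hs)
          rw [qBinom_pascal1 hq j s]
          simp only [Nat.add_sub_cancel]
          rw [tri s, pow_add q (s*(s-1)/2) s,
            show j+2-(s+1) = j+1-s from by omega,
            show i+(s+1) = i+1+s from by omega,
            show q^(j+1) = q^(j+1-s) * q^s from by rw [← pow_add]; congr 1; omega]
          ring
        · rw [qBinom_zero hq, qBinom_zero hq]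
    _ = ((∑ s ∈ Finset.range (j+2),
          (-1:ℝ)^(s+1) * q^((s+1)*(s+1-1)/2) * qBinom q (j+1) (s+1) * ρ^(s+1)
            * qHermite q (j+2-(s+1)) y * ascP q y ρ (i+(s+1)) x / qPoch (ρ^2) q (i+(s+1)))
        + (-1:ℝ)^0 * q^(0*(0-1)/2) * qBinom q (j+1) 0 * ρ^0 * qHermite q (j+2-0) y
            * ascP q y ρ (i+0) x / qPoch (ρ^2) q (i+0))
        + (∑ s ∈ Finset.range (j+2),
          (-(ρ * q^(j+1) * ((-1:ℝ)^s * q^(s*(s-1)/2) * qBinom q (j+1) s * ρ^s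
              * qHermite q (j+1-s) y * ascP q y ρ (i+1+s) x / qPoch (ρ^2) q (i+1+s))))) := by
        rw [Finset.sum_add_distrib]; ring
    _ = (∑ s ∈ Finset.range (j+2+1),
          (-1:ℝ)^s * q^(s*(s-1)/2) * qBinom q (j+1) s * ρ^s * qHermite q (j+2-s) y
            * ascP q y ρ (i+s) x / qPoch (ρ^2) q (i+s))
        + (∑ s ∈ Finset.range (j+2),
          (-(ρ * q^(j+1) * ((-1:ℝ)^s * q^(s*(s-1)/2) * qBinom q (j+1) s * ρ^s
              * qHermite q (j+1-s) y * ascP q y ρ (i+1+s) x / qPoch (ρ^2) q (i+1+s))))) := by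
        rw [Finset.sum_range_succ' (fun s => (-1:ℝ)^s * q^(s*(s-1)/2) * qBinom q (j+1) s * ρ^s
          * qHermite q (j+2-s) y * ascP q y ρ (i+s) x / qPoch (ρ^2) q (i+s)) (j+2)]
    _ = (∑ s ∈ Finset.range (j+2),
          (-1:ℝ)^s * q^(s*(s-1)/2) * qBinom q (j+1) s * ρ^s * qHermite q (j+2-s) y
            * ascP q y ρ (i+s) x / qPoch (ρ^2) q (i+s))
        + (∑ s ∈ Finset.range (j+2),
          (-(ρ * q^(j+1) * ((-1:ℝ)^s * q^(s*(s-1)/2) * qBinom q (j+1) s * ρ^s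
              * qHermite q (j+1-s) y * ascP q y ρ (i+1+s) x / qPoch (ρ^2) q (i+1+s))))) := by
        rw [Finset.sum_range_succ _ (j+2), qBinom_gt (show j+1 < j+2 from by omega)]
        simp
    _ = (∑ s ∈ Finset.range (j+2),
          (y * ((-1:ℝ)^s * q^(s*(s-1)/2) * qBinom q (j+1) s * ρ^s * qHermite q (j+1-s) y
            * ascP q y ρ (i+s) x / qPoch (ρ^2) q (i+s))
          - qNat q (j+1) * ((-1:ℝ)^s * q^(s*(s-1)/2) * qBinom q j s * ρ^s * qHermite q (j-s) y
            * ascP q y ρ (i+s) x / qPoch (ρ^2) q (i+s))))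
        + (∑ s ∈ Finset.range (j+2),
          (-(ρ * q^(j+1) * ((-1:ℝ)^s * q^(s*(s-1)/2) * qBinom q (j+1) s * ρ^s
              * qHermite q (j+1-s) y * ascP q y ρ (i+1+s) x / qPoch (ρ^2) q (i+1+s))))) := by
        congr 1
        apply Finset.sum_congr rfl
        intro s hs
        have hsle : s ≤ j+1 := by simpa using Nat.lt_succ_iff.mp (Finset.mem_range.mp hs)
        rw [hermite_split q y j hsle]
        linear_combination -((-1:ℝ)^s * q^(s*(s-1)/2) * ρ^s * qHermite q (j-s) y
            * ascP q y ρ (i+s) x / qPoch (ρ^2) q (i+s)) * (qBinom_absorb hq j s)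
    _ = y * Qpoly q ρ i (j+1) x y - qNat q (j+1) * Qpoly q ρ i j x y
        - ρ * q^(j+1) * Qpoly q ρ (i+1) (j+1) x y := by
        rw [Finset.sum_sub_distrib, ← Finset.mul_sum, ← Finset.mul_sum, Finset.sum_neg_distrib,
          ← Finset.mul_sum]
        unfold Qpoly
        rw [Finset.sum_range_succ (fun s => (-1:ℝ)^s * q^(s*(s-1)/2) * qBinom q j s * ρ^s
          * qHermite q (j-s) y * ascP q y ρ (i+s) x / qPoch (ρ^2) q (i+s)) (j+1),
          qBinom_gt (show j < j+1 from by omega)]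
        simp only [mul_zero, zero_mul, mul_assoc]
        ring

end Rec
section B0

lemma ascP_zero (q y ρ x : ℝ) : ascP q y ρ 0 x = 1 := rfl
lemma ascP_one (q y ρ x : ℝ) : ascP q y ρ 1 x = x - ρ*y := rfl

lemma b0 (q ρ x y : ℝ) (i : ℕ) :
    (1-ρ^2*q^i) * (1-ρ^2*q^(i+1)) * ascP q y ρ i x
      - ρ*(1-q)*(1-ρ^2*q^(i+1)) * y * ascP q y ρ (i+1) x
      + ρ^2*(1-q) * ascP q y ρ (i+2) x
    = ((1-ρ^2)^2 - ρ*(1+ρ^2)*(1-q)*x*y + ρ^2*(1-q)*(x^2+y^2)) * ascP q y (ρ*q) i x := by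
  induction i using Nat.twoStepInduction with
  | zero =>
    simp only [pow_zero, zero_add, pow_one]
    rw [ascP_two q y ρ x 0, ascP_zero, ascP_one, ascP_zero, qNat_one]
    simp only [pow_zero, pow_one]
    ring
  | one =>
    rw [show (1:ℕ)+2 = 1+2 from rfl, ascP_two q y ρ x 1, show (1:ℕ)+1 = 0+2 from rfl,
      ascP_two q y ρ x 0, ascP_zero, ascP_one, ascP_one, qNat_one]
    rw [show qNat q (0+2) = 1 + q from by rw [qNat_succ, qNat_one]; norm_num]
    norm_num
    ring
  | more i h1 h2 =>
    rw [ascP_two q y ρ x (i+2), show i+2+1 = (i+1)+2 from rfl, ascP_two q y ρ x (i+1),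
      show i+1+1 = i+2 from rfl, ascP_two q y ρ x i, ascP_two q y (ρ*q) x i] at *
    rw [show i+1+1 = i+2 from rfl] at *
    simp only [pow_succ, qNat_succ] at *
    linear_combination (x - ρ*q*y*(q^i*q)) * h2
      - ((qNat q i + q^i)*(1-(ρ*q)^2*q^i)) * h1

end B0
section KI2
variable {q ρ : ℝ} (hq : |q| < 1) (hρ : |ρ| < 1)

lemma qPoch_top (a q : ℝ) (n : ℕ) : qPoch a q (n+1) = qPoch a q n * (1-a*q^n) :=
  Finset.prod_range_succ _ n

include hq

lemma Qpoly_j0 (ρ x y : ℝ) (i : ℕ) :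
    Qpoly q ρ i 0 x y = ascP q y ρ i x / qPoch (ρ^2) q i := by
  unfold Qpoly
  rw [Finset.sum_range_one, qBinom_zero hq]
  show (-1:ℝ)^0 * q^0 * 1 * ρ^0 * qHermite q 0 y * ascP q y ρ (i+0) x / qPoch (ρ^2) q (i+0) = _
  norm_num [qHermite]

lemma Qpoly_j1 (ρ x y : ℝ) (i : ℕ) :
    Qpoly q ρ i 1 x y = y * ascP q y ρ i x / qPoch (ρ^2) q i
      - ρ * ascP q y ρ (i+1) x / qPoch (ρ^2) q (i+1) := by
  unfold Qpoly
  rw [Finset.sum_range_succ, Finset.sum_range_one, qBinom_zero hq, qBinom_self hq]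
  norm_num [qHermite]
  ring

lemma qpoly_rec0 (ρ x y : ℝ) (i : ℕ) :
    Qpoly q ρ i 1 x y = y * Qpoly q ρ i 0 x y - ρ * Qpoly q ρ (i+1) 0 x y := by
  rw [Qpoly_j1 hq, Qpoly_j0 hq, Qpoly_j0 hq]
  ring

include hρ

lemma abs_mul_lt_one : |ρ*q| < 1 := by
  rw [abs_mul]
  calc abs ρ * abs q ≤ abs ρ * 1 := mul_le_mul_of_nonneg_left hq.le (abs_nonneg ρ)
  _ < 1 := by simpa using hρ

lemma ki2_j0 (x y : ℝ) (i : ℕ) :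
    (1-ρ^2)*(1-ρ^2*q) * (Qpoly q ρ i 0 x y - ρ*(1-q) * Qpoly q ρ (i+1) (0+1) x y)
    = ((1-ρ^2)^2 - ρ*(1+ρ^2)*(1-q)*x*y + ρ^2*(1-q)*(x^2+y^2)) * Qpoly q (ρ*q) i 0 x y := by
  have hρq : |ρ*q| < 1 := abs_mul_lt_one hq hρ
  have hb := b0 q ρ x y i
  have e1 := Qpoly_j0 hq ρ x y i
  have e3 := Qpoly_j0 hq (ρ*q) x y i
  have e2 : Qpoly q ρ (i+1) (0+1) x y = y * ascP q y ρ (i+1) x / qPoch (ρ^2) q (i+1)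
      - ρ * ascP q y ρ (i+1+1) x / qPoch (ρ^2) q (i+1+1) := Qpoly_j1 hq ρ x y (i+1)
  rw [e1, e2, e3]
  have hp0 : qPoch (ρ^2) q i ≠ 0 := (qPoch_pos hq hρ i).ne'
  have hs1 : qPoch (ρ^2) q (i+1) = qPoch (ρ^2) q i * (1-ρ^2*q^i) := qPoch_top _ _ _
  have hs2 : qPoch (ρ^2) q (i+1+1) = qPoch (ρ^2) q i * (1-ρ^2*q^i) * (1-ρ^2*q^(i+1)) := by
    rw [qPoch_top, hs1]
  have hsplit : qPoch (ρ^2) q i * (1-ρ^2*q^i) * (1-ρ^2*q^(i+1))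
      = (1-ρ^2) * (1-ρ^2*q) * qPoch ((ρ*q)^2) q i := by
    rw [← hs2, show i+1+1 = i+2 from rfl]
    exact qPoch_split ρ q i
  have hr0 : qPoch ((ρ*q)^2) q i ≠ 0 := (qPoch_pos hq hρq i).ne'
  have hf1 : (1:ℝ)-ρ^2*q^i ≠ 0 := (one_sub_sq_mul_pow_pos hq hρ i).ne'
  have hf2 : (1:ℝ)-ρ^2*q^(i+1) ≠ 0 := (one_sub_sq_mul_pow_pos hq hρ (i+1)).ne'
  have hd1 : (1:ℝ)-ρ^2 ≠ 0 := by
    have := one_sub_sq_mul_pow_pos hq hρ 0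
    simpa using this.ne'
  have hd2 : (1:ℝ)-ρ^2*q ≠ 0 := by
    have := one_sub_sq_mul_pow_pos hq hρ 1
    simpa using this.ne'
  have target2 : ((1-ρ^2)^2 - ρ*(1+ρ^2)*(1-q)*x*y + ρ^2*(1-q)*(x^2+y^2))
        * (ascP q y (ρ*q) i x / qPoch ((ρ*q)^2) q i)
      = (1-ρ^2)*(1-ρ^2*q)
        * (((1-ρ^2)^2 - ρ*(1+ρ^2)*(1-q)*x*y + ρ^2*(1-q)*(x^2+y^2)) * ascP q y (ρ*q) i x)
        / (qPoch (ρ^2) q i * (1-ρ^2*q^i) * (1-ρ^2*q^(i+1))) := by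
    rw [hsplit]
    field_simp
  rw [mul_div_assoc, target2, ← hb, hs1, hs2]
  field_simp
  ring
end KI2
section KI2b
variable {q ρ : ℝ} (hq : |q| < 1) (hρ : |ρ| < 1)
include hq hρ

lemma ki2 (x y : ℝ) (j : ℕ) : ∀ i,
    (1-ρ^2)*(1-ρ^2*q) * (Qpoly q ρ i j x y - ρ*(1-q) * Qpoly q ρ (i+1) (j+1) x y)
    = ((1-ρ^2)^2 - ρ*(1+ρ^2)*(1-q)*x*y + ρ^2*(1-q)*(x^2+y^2)) * Qpoly q (ρ*q) i j x y := by
  induction j using Nat.twoStepInduction with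
  | zero => exact fun i => ki2_j0 hq hρ x y i
  | one =>
    intro i
    have hA := qpoly_rec0 hq ρ x y i
    have hB := qpoly_rec hq ρ x y (i+1) 0
    have hC := qpoly_rec0 hq (ρ*q) x y i
    have h1 := ki2_j0 hq hρ x y i
    have h2 := ki2_j0 hq hρ x y (i+1)
    simp only [zero_add, pow_one, qNat_one] at hA hB hC h1 h2 ⊢
    linear_combination (1-ρ^2)*(1-ρ^2*q) * hA - (1-ρ^2)*(1-ρ^2*q)*ρ*(1-q) * hB
      - ((1-ρ^2)^2 - ρ*(1+ρ^2)*(1-q)*x*y + ρ^2*(1-q)*(x^2+y^2)) * hC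
      + y * h1 - ρ*q * h2
  | more j h1 h2 =>
    intro i
    have hR1 := qpoly_rec hq ρ x y i j
    have hR2 := qpoly_rec hq ρ x y (i+1) (j+1)
    have hR3 := qpoly_rec hq (ρ*q) x y i j
    have e2 := h2 i
    have e1 := h1 i
    have e3 := h2 (i+1)
    rw [qNat_succ q (j+1), pow_succ q (j+1)] at hR2
    linear_combination (1-ρ^2)*(1-ρ^2*q) * hR1 - (1-ρ^2)*(1-ρ^2*q)*ρ*(1-q) * hR2
      - ((1-ρ^2)^2 - ρ*(1+ρ^2)*(1-q)*x*y + ρ^2*(1-q)*(x^2+y^2)) * hR3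
      + y * e2 - qNat q (j+1) * e1 - ρ*q^(j+1)*q * e3
end KI2b
section Main

lemma omega_prod_split (a b ρ q : ℝ) (k : ℕ) :
    ∏ j ∈ Finset.range (k+1), omegaPM a b (ρ*q^j)
      = omegaPM a b ρ * ∏ j ∈ Finset.range k, omegaPM a b (ρ*q*q^j) := by
  rw [Finset.prod_range_succ', show ρ*(q:ℝ)^0 = ρ from by norm_num, mul_comm]
  congr 1
  exact Finset.prod_congr rfl fun j _ => by
    rw [show ρ*q^(j+1) = ρ*q*q^j from by rw [pow_succ]; ring]

lemma omega_poly {q : ℝ} (hq : |q| < 1) (x y r : ℝ) :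
    omegaPM (x*Real.sqrt (1-q)/2) (y*Real.sqrt (1-q)/2) r
      = (1-r^2)^2 - r*(1+r^2)*(1-q)*x*y + r^2*(1-q)*(x^2+y^2) := by
  have hs : Real.sqrt (1-q)^2 = 1-q := Real.sq_sqrt (by linarith [(abs_lt.mp hq).2])
  unfold omegaPM
  linear_combination (r^2*(x^2+y^2) - r*(1+r^2)*x*y) * hs

theorem statement12' (q : ℝ) (hq : |q| < 1) (n : ℕ) (x y : ℝ) :
    ∀ ρ : ℝ, |ρ| < 1 →
    q ^ (n * (n - 1) / 2) * ρ ^ n * (1 - q) ^ n * Qpoly q ρ n n x y =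
      ∑ k ∈ Finset.range (n + 1),
        (-1 : ℝ) ^ k * q ^ ((n - k) * (n - k - 1) / 2) * qBinom q n k *
          (∏ j ∈ Finset.range k,
            omegaPM (x * Real.sqrt (1 - q) / 2) (y * Real.sqrt (1 - q) / 2) (ρ * q ^ j)) /
          qPoch (ρ ^ 2) q (2 * k) := by
  induction n with
  | zero =>
    intro ρ hρ
    rw [Finset.sum_range_one]
    simp [Qpoly_j0 hq, qBinom_zero hq, qPoch, ascP]
  | succ n ih =>
    intro ρ hρ
    have hρq : |ρ*q| < 1 := abs_mul_lt_one hq hρ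
    have hd1 : (1:ℝ)-ρ^2 ≠ 0 := by
      have := one_sub_sq_mul_pow_pos hq hρ 0; simpa using this.ne'
    have hd2 : (1:ℝ)-ρ^2*q ≠ 0 := by
      have := one_sub_sq_mul_pow_pos hq hρ 1; simpa using this.ne'
    have hd : ((1:ℝ)-ρ^2)*(1-ρ^2*q) ≠ 0 := mul_ne_zero hd1 hd2
    have hK := ki2 hq hρ x y n n
    have trans : (∑ k ∈ Finset.range (n+1+1),
          (-1 : ℝ)^k * q^((n+1-k)*(n+1-k-1)/2) * qBinom q (n+1) k *
            (∏ j ∈ Finset.range k,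
              omegaPM (x * Real.sqrt (1 - q) / 2) (y * Real.sqrt (1 - q) / 2) (ρ * q ^ j)) /
            qPoch (ρ^2) q (2*k))
        = q^n * (∑ k ∈ Finset.range (n+1),
            (-1 : ℝ)^k * q^((n-k)*(n-k-1)/2) * qBinom q n k *
              (∏ j ∈ Finset.range k,
                omegaPM (x * Real.sqrt (1 - q) / 2) (y * Real.sqrt (1 - q) / 2) (ρ * q ^ j)) /
              qPoch (ρ^2) q (2*k))
          - omegaPM (x * Real.sqrt (1 - q) / 2) (y * Real.sqrt (1 - q) / 2) ρ
              / ((1-ρ^2)*(1-ρ^2*q))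
            * (∑ k ∈ Finset.range (n+1),
              (-1 : ℝ)^k * q^((n-k)*(n-k-1)/2) * qBinom q n k *
                (∏ j ∈ Finset.range k,
                  omegaPM (x * Real.sqrt (1 - q) / 2) (y * Real.sqrt (1 - q) / 2) (ρ*q * q ^ j)) /
                qPoch ((ρ*q)^2) q (2*k)) := by
      calc (∑ k ∈ Finset.range (n+1+1),
            (-1 : ℝ)^k * q^((n+1-k)*(n+1-k-1)/2) * qBinom q (n+1) k *
              (∏ j ∈ Finset.range k,
                omegaPM (x * Real.sqrt (1 - q) / 2) (y * Real.sqrt (1 - q) / 2) (ρ * q ^ j)) /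
              qPoch (ρ^2) q (2*k))
          = (∑ k ∈ Finset.range (n+1),
              (-1 : ℝ)^(k+1) * q^((n+1-(k+1))*(n+1-(k+1)-1)/2) * qBinom q (n+1) (k+1) *
                (∏ j ∈ Finset.range (k+1),
                  omegaPM (x * Real.sqrt (1 - q) / 2) (y * Real.sqrt (1 - q) / 2) (ρ * q ^ j)) /
                qPoch (ρ^2) q (2*(k+1)))
            + (-1 : ℝ)^0 * q^((n+1-0)*(n+1-0-1)/2) * qBinom q (n+1) 0 *
                (∏ j ∈ Finset.range 0,
                  omegaPM (x * Real.sqrt (1 - q) / 2) (y * Real.sqrt (1 - q) / 2) (ρ * q ^ j)) /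
                qPoch (ρ^2) q (2*0) :=
            Finset.sum_range_succ' _ (n+1)
        _ = (∑ k ∈ Finset.range (n+1),
              (q^n * ((-1 : ℝ)^(k+1) * q^((n-(k+1))*(n-(k+1)-1)/2) * qBinom q n (k+1) *
                (∏ j ∈ Finset.range (k+1),
                  omegaPM (x * Real.sqrt (1 - q) / 2) (y * Real.sqrt (1 - q) / 2) (ρ * q ^ j)) /
                qPoch (ρ^2) q (2*(k+1)))
              + (-(omegaPM (x * Real.sqrt (1 - q) / 2) (y * Real.sqrt (1 - q) / 2) ρ
                    / ((1-ρ^2)*(1-ρ^2*q))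
                  * ((-1 : ℝ)^k * q^((n-k)*(n-k-1)/2) * qBinom q n k *
                    (∏ j ∈ Finset.range k,
                      omegaPM (x * Real.sqrt (1 - q) / 2) (y * Real.sqrt (1 - q) / 2) (ρ*q * q ^ j)) /
                    qPoch ((ρ*q)^2) q (2*k))))))
            + q^n * ((-1 : ℝ)^0 * q^((n-0)*(n-0-1)/2) * qBinom q n 0 *
                (∏ j ∈ Finset.range 0,
                  omegaPM (x * Real.sqrt (1 - q) / 2) (y * Real.sqrt (1 - q) / 2) (ρ * q ^ j)) /
                qPoch (ρ^2) q (2*0)) := by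
            congr 1
            · apply Finset.sum_congr rfl
              intro k hk
              have hkn : k ≤ n := by simpa using Nat.lt_succ_iff.mp (Finset.mem_range.mp hk)
              rw [qBinom_pascal2 hq n k,
                show n+1-(k+1) = n-k from by omega,
                omega_prod_split, show 2*(k+1) = 2*k+2 from by omega,
                qPoch_split ρ q (2*k),
                show n-(k+1) = n-k-1 from by omega]
              have hrne : qPoch ((ρ*q)^2) q (2*k) ≠ 0 := (qPoch_pos hq hρq (2*k)).ne'
              rcases lt_or_ge k n with hlt | hge
              · have t := tri (n-k-1)
                rw [show n-k-1+1 = n-k from by omega] at t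
                have hexp : q^((n-k)*(n-k-1)/2) * q^(k+1)
                    = q^n * q^((n-k-1)*(n-k-1-1)/2) := by
                  rw [← pow_add, ← pow_add]
                  congr 1
                  omega
                simp only [div_eq_mul_inv, mul_inv]
                linear_combination ((-1:ℝ)^(k+1) * qBinom q n (k+1)
                  * omegaPM (x * Real.sqrt (1 - q) * 2⁻¹) (y * Real.sqrt (1 - q) * 2⁻¹) ρ
                  * (∏ j ∈ Finset.range k,
                      omegaPM (x * Real.sqrt (1 - q) * 2⁻¹) (y * Real.sqrt (1 - q) * 2⁻¹) (ρ*q * q ^ j))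
                  * (1 - ρ ^ 2)⁻¹ * (1 - ρ ^ 2 * q)⁻¹ * (qPoch ((ρ * q) ^ 2) q (2 * k))⁻¹) * hexp
              · have hkeq : k = n := by omega
                subst hkeq
                rw [qBinom_gt (show k < k+1 from by omega)]
                field_simp
                ring
            · rw [qBinom_zero hq, qBinom_zero hq, Nat.sub_zero, Nat.sub_zero, Nat.add_sub_cancel,
                show (n+1)*n/2 = n*(n-1)/2 + n from tri n, pow_add]
              ring
        _ = q^n * ((∑ k ∈ Finset.range (n+1),
              ((-1 : ℝ)^(k+1) * q^((n-(k+1))*(n-(k+1)-1)/2) * qBinom q n (k+1) *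
                (∏ j ∈ Finset.range (k+1),
                  omegaPM (x * Real.sqrt (1 - q) / 2) (y * Real.sqrt (1 - q) / 2) (ρ * q ^ j)) /
                qPoch (ρ^2) q (2*(k+1))))
              + ((-1 : ℝ)^0 * q^((n-0)*(n-0-1)/2) * qBinom q n 0 *
                (∏ j ∈ Finset.range 0,
                  omegaPM (x * Real.sqrt (1 - q) / 2) (y * Real.sqrt (1 - q) / 2) (ρ * q ^ j)) /
                qPoch (ρ^2) q (2*0)))
            - omegaPM (x * Real.sqrt (1 - q) / 2) (y * Real.sqrt (1 - q) / 2) ρ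
                / ((1-ρ^2)*(1-ρ^2*q))
              * (∑ k ∈ Finset.range (n+1),
                (-1 : ℝ)^k * q^((n-k)*(n-k-1)/2) * qBinom q n k *
                  (∏ j ∈ Finset.range k,
                    omegaPM (x * Real.sqrt (1 - q) / 2) (y * Real.sqrt (1 - q) / 2) (ρ*q * q ^ j)) /
                  qPoch ((ρ*q)^2) q (2*k)) := by
            rw [Finset.sum_add_distrib, ← Finset.mul_sum, Finset.sum_neg_distrib, ← Finset.mul_sum]
            ring
        _ = q^n * (∑ k ∈ Finset.range (n+1+1),
              ((-1 : ℝ)^k * q^((n-k)*(n-k-1)/2) * qBinom q n k *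
                (∏ j ∈ Finset.range k,
                  omegaPM (x * Real.sqrt (1 - q) / 2) (y * Real.sqrt (1 - q) / 2) (ρ * q ^ j)) /
                qPoch (ρ^2) q (2*k)))
            - omegaPM (x * Real.sqrt (1 - q) / 2) (y * Real.sqrt (1 - q) / 2) ρ
                / ((1-ρ^2)*(1-ρ^2*q))
              * (∑ k ∈ Finset.range (n+1),
                (-1 : ℝ)^k * q^((n-k)*(n-k-1)/2) * qBinom q n k *
                  (∏ j ∈ Finset.range k,
                    omegaPM (x * Real.sqrt (1 - q) / 2) (y * Real.sqrt (1 - q) / 2) (ρ*q * q ^ j)) /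
                  qPoch ((ρ*q)^2) q (2*k)) := by
            rw [← Finset.sum_range_succ' (fun k => (-1 : ℝ)^k * q^((n-k)*(n-k-1)/2) * qBinom q n k *
                (∏ j ∈ Finset.range k,
                  omegaPM (x * Real.sqrt (1 - q) / 2) (y * Real.sqrt (1 - q) / 2) (ρ * q ^ j)) /
                qPoch (ρ^2) q (2*k)) (n+1)]
        _ = _ := by
            rw [Finset.sum_range_succ _ (n+1), qBinom_gt (show n < n+1 from by omega)]
            simp
    rw [trans, ← ih ρ hρ, ← ih (ρ*q) hρq]
    rw [omega_poly hq x y ρ]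
    apply mul_left_cancel₀ hd
    rw [show ((1:ℝ)-ρ^2)*(1-ρ^2*q) * (q^n * (q^(n*(n-1)/2) * ρ^n * (1-q)^n * Qpoly q ρ n n x y)
          - ((1-ρ^2)^2 - ρ*(1+ρ^2)*(1-q)*x*y + ρ^2*(1-q)*(x^2+y^2)) / ((1-ρ^2)*(1-ρ^2*q))
            * (q^(n*(n-1)/2) * (ρ*q)^n * (1-q)^n * Qpoly q (ρ*q) n n x y))
        = (1-ρ^2)*(1-ρ^2*q) * (q^n * (q^(n*(n-1)/2) * ρ^n * (1-q)^n * Qpoly q ρ n n x y))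
          - ((1-ρ^2)^2 - ρ*(1+ρ^2)*(1-q)*x*y + ρ^2*(1-q)*(x^2+y^2))
            * (q^(n*(n-1)/2) * (ρ*q)^n * (1-q)^n * Qpoly q (ρ*q) n n x y) from by
        field_simp]
    rw [Nat.add_sub_cancel, show (n+1)*n/2 = n*(n-1)/2 + n from tri n, pow_add, mul_pow]
    linear_combination (-(q^(n*(n-1)/2) * ρ^n * (1-q)^n * q^n)) * hK

end Main


/-- q^{n(n-1)/2} ρ^n (1-q)^n Q_{n,n}(x,y|ρ,q)
= Σ_{k=0}^n (-1)^k q^{(n-k)(n-k-1)/2} [n choose k]_q (∏_{j<k} ω) / (ρ²;q)_{2k}. -/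
theorem statement12 (q ρ : ℝ) (hq : |q| < 1) (hρ : |ρ| < 1) (n : ℕ) (x y : ℝ) :
    q ^ (n * (n - 1) / 2) * ρ ^ n * (1 - q) ^ n * Qpoly q ρ n n x y =
      ∑ k ∈ Finset.range (n + 1),
        (-1 : ℝ) ^ k * q ^ ((n - k) * (n - k - 1) / 2) * qBinom q n k *
          (∏ j ∈ Finset.range k,
            omegaPM (x * Real.sqrt (1 - q) / 2) (y * Real.sqrt (1 - q) / 2) (ρ * q ^ j)) /
          qPoch (ρ ^ 2) q (2 * k) := by
  exact statement12' q hq n x y ρ hρ
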